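/- Every 2×3×3 quaternion tensor T : Fin 2 → Fin 3 → Fin 3 → ℍ has rank at most 4, i.e. T can be written as a sum of 4 simple tensors. -/

import Mathlib

noncomputable section
open scoped BigOperators
set_option maxHeartbeats 1000000

abbrev Hq : Type := Quaternion ℝ
abbrev V3 : Type := Fin 3 → Hq

namespace R233

/-- right scaling of a vector -/
def rs (v : V3) (s : Hq) : V3 := fun j => v j * s
/-- left scaling of a vector -/
def ls (c : Hq) (v : V3) : V3 := fun j => c * v j

def qi : Hq := ⟨0,1,0,0⟩
def qj : Hq := ⟨0,0,1,0⟩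

lemma qi_sq : qi * qi = -1 := by ext <;> simp only [Quaternion.re_mul, Quaternion.imI_mul, Quaternion.imJ_mul, Quaternion.imK_mul, Quaternion.re_neg, Quaternion.imI_neg, Quaternion.imJ_neg, Quaternion.imK_neg, Quaternion.re_one, Quaternion.imI_one, Quaternion.imJ_one, Quaternion.imK_one] <;> simp [qi]

lemma coe_comm (r : ℝ) (q : Hq) : (r : Hq) * q = q * (r : Hq) := Quaternion.coe_commutes r q

/-- (s i)^2 = -s^2 -/
lemma qs_sq (s : ℝ) : ((s : Hq) * qi) * ((s : Hq) * qi) = -((s^2 : ℝ) : Hq) := by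
  have : ((s : Hq) * qi) * ((s : Hq) * qi) = ((s : Hq) * (s : Hq)) * (qi * qi) := by
    rw [mul_assoc, ← mul_assoc qi, ← coe_comm, mul_assoc, ← mul_assoc]
  rw [this, qi_sq]
  push_cast
  rw [mul_neg_one]
  rw [pow_two]

lemma conj_sq (w x : Hq) (hw : w ≠ 0) : (w * x * w⁻¹) * (w * x * w⁻¹) = w * (x * x) * w⁻¹ := by
  have : w * x * w⁻¹ * (w * x * w⁻¹) = w * x * (w⁻¹ * w) * x * w⁻¹ := by
    noncomm_ring
  rw [this, inv_mul_cancel₀ hw, mul_one, mul_assoc w x x, ← mul_assoc]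

/-- conjugate of (s i) squares to -s², real (central) -/
lemma conj_qs_sq (w : Hq) (hw : w ≠ 0) (s : ℝ) :
    (w * ((s:Hq) * qi) * w⁻¹) * (w * ((s:Hq) * qi) * w⁻¹) = -((s^2 : ℝ) : Hq) := by
  rw [conj_sq _ _ hw, qs_sq]
  have : w * (-((s^2:ℝ):Hq)) = (-((s^2:ℝ):Hq)) * w := by
    rw [mul_neg, neg_mul, coe_comm]
  rw [this, mul_assoc, mul_inv_cancel₀ hw, mul_one]

def ee (k : Fin 3) : V3 := fun j => if j = k then 1 else 0

def t3 (p : Fin 3 → V3) (s : Fin 3 → Hq) : V3 :=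
  fun j => p 0 j * s 0 + p 1 j * s 1 + p 2 j * s 2

def RIndep (p : Fin 3 → V3) : Prop := ∀ s : Fin 3 → Hq, t3 p s = 0 → s = 0

structure RLin (M : V3 → V3) : Prop where
  addmap : ∀ x y, M (x + y) = M x + M y
  rsmap : ∀ v s, M (rs v s) = rs (M v) s

lemma RLin.zero {M : V3 → V3} (h : RLin M) : M 0 = 0 := by
  have h0 := h.rsmap 0 0
  have : rs (0 : V3) 0 = (0 : V3) := by funext j; simp [rs]
  rw [this] at h0
  have : rs (M 0) 0 = (0 : V3) := by funext j; simp [rs]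
  rw [this] at h0
  exact h0

/-- the Φ map as an ℝ-linear endomorphism -/
def phi (p : Fin 3 → V3) : V3 →ₗ[ℝ] V3 where
  toFun s := t3 p s
  map_add' x y := by
    funext j
    simp only [t3, Pi.add_apply, mul_add]
    abel
  map_smul' r x := by
    funext j
    simp [t3, Pi.smul_apply, smul_add, mul_smul_comm]

lemma rindep_solve (p : Fin 3 → V3) (hp : RIndep p) (v : V3) :
    ∃ s : Fin 3 → Hq, v = t3 p s := by
  have hinj : Function.Injective (phi p) := by
    rw [injective_iff_map_eq_zero]
    intro s hs
    exact hp s hs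
  have hsurj : Function.Surjective (phi p) := by
    rwa [← LinearMap.injective_iff_surjective]
  obtain ⟨s, hs⟩ := hsurj v
  exact ⟨s, hs.symm⟩


/-- 4-term covering property of a map `M` (left coefficients alpha, beta). -/
def Covers (M : V3 → V3) : Prop :=
  ∃ (al be : Fin 4 → Hq) (P : Fin 4 → V3), ∀ v : V3, ∃ s : Fin 4 → Hq,
    (∀ j, v j = al 0 * (P 0 j * s 0) + al 1 * (P 1 j * s 1) + al 2 * (P 2 j * s 2)
        + al 3 * (P 3 j * s 3)) ∧
    (∀ j, M v j = be 0 * (P 0 j * s 0) + be 1 * (P 1 j * s 1) + be 2 * (P 2 j * s 2)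
        + be 3 * (P 3 j * s 3))

/-- Left-quasi-diagonal data implies covering. -/
lemma lqd_covers (M : V3 → V3) (hM : RLin M) (p : Fin 3 → V3) (hp : RIndep p)
    (γ : Fin 3 → Hq) (u : V3) (d : Fin 3 → Hq)
    (h : ∀ m, M (p m) = ls (γ m) (p m) + rs u (d m)) : Covers M := by
  refine ⟨![1, 1, 1, 0], ![γ 0, γ 1, γ 2, 1], ![p 0, p 1, p 2, u], ?_⟩
  intro v
  obtain ⟨s, hs⟩ := rindep_solve p hp v
  refine ⟨![s 0, s 1, s 2, d 0 * s 0 + d 1 * s 1 + d 2 * s 2], ?_, ?_⟩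
  · intro j
    simp only [Matrix.cons_val_zero, Matrix.cons_val_one, Matrix.head_cons,
      Matrix.cons_val_two, Matrix.tail_cons, Matrix.cons_val_three]
    rw [hs]
    simp [t3]
  · intro j
    have hv : v = (rs (p 0) (s 0) + rs (p 1) (s 1)) + rs (p 2) (s 2) := by
      funext j'
      rw [hs]
      simp [t3, rs]
    have hMv : M v = (rs (M (p 0)) (s 0) + rs (M (p 1)) (s 1)) + rs (M (p 2)) (s 2) := by
      rw [hv, hM.addmap, hM.addmap, hM.rsmap, hM.rsmap, hM.rsmap]
    have : M v j = M (p 0) j * s 0 + M (p 1) j * s 1 + M (p 2) j * s 2 := by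
      rw [hMv]; simp [rs]
    rw [this, h 0, h 1, h 2]
    simp only [Matrix.cons_val_zero, Matrix.cons_val_one, Matrix.head_cons,
      Matrix.cons_val_two, Matrix.tail_cons, Matrix.cons_val_three,
      Pi.add_apply, ls, rs]
    noncomm_ring

/-- Two deficient shifts (the 2+2 pattern) implies covering. -/
lemma two2_covers (M : V3 → V3) (γ δ : Hq) (hne : γ ≠ δ)
    (r1 r2 r3 r4 : V3)
    (hγ : ∀ v : V3, ∃ a b : Hq, ∀ j, M v j - γ * v j = r1 j * a + r2 j * b)
    (hδ : ∀ v : V3, ∃ a b : Hq, ∀ j, M v j - δ * v j = r3 j * a + r4 j * b) :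
    Covers M := by
  have hgd : γ - δ ≠ 0 := sub_ne_zero.mpr hne
  refine ⟨![1,1,1,1], ![γ, γ, δ, δ],
    ![ls (γ-δ)⁻¹ r3, ls (γ-δ)⁻¹ r4, ls (δ-γ)⁻¹ r1, ls (δ-γ)⁻¹ r2], ?_⟩
  intro v
  obtain ⟨a, b, hab⟩ := hδ v
  obtain ⟨c, e, hce⟩ := hγ v
  refine ⟨![a, b, c, e], ?_, ?_⟩
  · intro j
    simp only [Matrix.cons_val_zero, Matrix.cons_val_one, Matrix.head_cons,
      Matrix.cons_val_two, Matrix.tail_cons, Matrix.cons_val_three, ls, one_mul]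
    have h1 : (γ-δ)⁻¹ * (r3 j) * a + (γ-δ)⁻¹ * (r4 j) * b = (γ-δ)⁻¹ * (M v j - δ * v j) := by
      rw [hab j]; noncomm_ring
    have h2 : (δ-γ)⁻¹ * (r1 j) * c + (δ-γ)⁻¹ * (r2 j) * e = (δ-γ)⁻¹ * (M v j - γ * v j) := by
      rw [hce j]; noncomm_ring
    have hdg : (δ - γ)⁻¹ = -(γ-δ)⁻¹ := by
      rw [← neg_sub γ δ, inv_neg]
    calc v j = (γ-δ)⁻¹ * ((γ - δ) * v j) := by
            rw [← mul_assoc, inv_mul_cancel₀ hgd, one_mul]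
      _ = (γ-δ)⁻¹ * (M v j - δ * v j) + (δ-γ)⁻¹ * (M v j - γ * v j) := by
            rw [hdg]; noncomm_ring
      _ = _ := by
            rw [← h1, ← h2]; noncomm_ring
  · intro j
    simp only [Matrix.cons_val_zero, Matrix.cons_val_one, Matrix.head_cons,
      Matrix.cons_val_two, Matrix.tail_cons, Matrix.cons_val_three, ls]
    have h1 : γ * ((γ-δ)⁻¹ * (r3 j) * a) + γ * ((γ-δ)⁻¹ * (r4 j) * b)
        = γ * ((γ-δ)⁻¹ * (M v j - δ * v j)) := by
      rw [show γ * ((γ-δ)⁻¹ * (M v j - δ * v j)) = γ * ((γ-δ)⁻¹ * (r3 j * a + r4 j * b)) by rw [hab j]]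
      noncomm_ring
    have h2 : δ * ((δ-γ)⁻¹ * (r1 j) * c) + δ * ((δ-γ)⁻¹ * (r2 j) * e)
        = δ * ((δ-γ)⁻¹ * (M v j - γ * v j)) := by
      rw [show δ * ((δ-γ)⁻¹ * (M v j - γ * v j)) = δ * ((δ-γ)⁻¹ * (r1 j * c + r2 j * e)) by rw [hce j]]
      noncomm_ring
    have hdg : (δ - γ)⁻¹ = -(γ-δ)⁻¹ := by
      rw [← neg_sub γ δ, inv_neg]
    have key : γ * ((γ-δ)⁻¹ * (M v j - δ * v j)) + δ * ((δ-γ)⁻¹ * (M v j - γ * v j)) = M v j := by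
      rw [hdg]
      have e1 : (γ - δ) * ((γ-δ)⁻¹ * (M v j - δ * v j)) = M v j - δ * v j := by
        rw [← mul_assoc, mul_inv_cancel₀ hgd, one_mul]
      have : γ * ((γ-δ)⁻¹ * (M v j - δ * v j)) + δ * (-(γ-δ)⁻¹ * (M v j - γ * v j))
          = (γ - δ) * ((γ-δ)⁻¹ * (M v j - δ * v j)) + δ * ((γ-δ)⁻¹ * (M v j - δ * v j))
            - δ * ((γ-δ)⁻¹ * (M v j - γ * v j)) := by noncomm_ring
      rw [this, e1]
      have h3 : δ * ((γ-δ)⁻¹ * (M v j - δ * v j)) - δ * ((γ-δ)⁻¹ * (M v j - γ * v j))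
          = δ * v j := by
        rw [← mul_sub, ← mul_sub,
          show (M v j - δ * v j) - (M v j - γ * v j) = (γ - δ) * v j by noncomm_ring,
          ← mul_assoc (γ-δ)⁻¹, inv_mul_cancel₀ hgd, one_mul]
      have h4 : M v j - δ * v j + δ * ((γ-δ)⁻¹ * (M v j - δ * v j))
            - δ * ((γ-δ)⁻¹ * (M v j - γ * v j))
          = M v j - δ * v j + (δ * ((γ-δ)⁻¹ * (M v j - δ * v j))
            - δ * ((γ-δ)⁻¹ * (M v j - γ * v j))) := by noncomm_ring
      rw [h4, h3]
      noncomm_ring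
    calc M v j = γ * ((γ-δ)⁻¹ * (M v j - δ * v j)) + δ * ((δ-γ)⁻¹ * (M v j - γ * v j)) := key.symm
      _ = _ := by rw [← h1, ← h2]; noncomm_ring


lemma right_cancel0 {x y : Hq} (h : x * y = 0) (hy : y ≠ 0) : x = 0 := by
  rcases mul_eq_zero.mp h with h' | h'
  · exact h'
  · exact absurd h' hy

lemma conj_real (w : Hq) (hw : w ≠ 0) (c : Hq) (hc : ∀ x : Hq, c * x = x * c) :
    w * c * w⁻¹ = c := by
  rw [show w * c = c * w from (hc w).symm, mul_assoc, mul_inv_cancel₀ hw, mul_one]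

lemma coe_central (r : ℝ) : ∀ x : Hq, (-(r:Hq)) * x = x * (-(r:Hq)) := by
  intro x
  rw [neg_mul, mul_neg, coe_comm]

/-- vanishing of a (left-coefficient) quadratic at three points with distinct real
negative squares forces zero coefficients. -/
lemma quad_zero (A B C : Hq) (x1 x2 x3 : Hq) (s1 s2 s3 : ℝ)
    (hx1 : x1 * x1 = -((s1^2 : ℝ) : Hq))
    (hx2 : x2 * x2 = -((s2^2 : ℝ) : Hq))
    (hx3 : x3 * x3 = -((s3^2 : ℝ) : Hq))
    (h12 : s1^2 ≠ s2^2) (h13 : s1^2 ≠ s3^2) (h23 : s2^2 ≠ s3^2)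
    (e1 : A * (x1 * x1) + B * x1 + C = 0)
    (e2 : A * (x2 * x2) + B * x2 + C = 0)
    (e3 : A * (x3 * x3) + B * x3 + C = 0) :
    A = 0 ∧ B = 0 ∧ C = 0 := by
  have hcoe : ∀ a b : ℝ, a ≠ b → ((a:ℝ):Hq) ≠ (b:Hq) := by
    intro a b hab h
    exact hab (Quaternion.coe_injective h)
  have hne : ∀ (y z : Hq) (sy sz : ℝ), y * y = -((sy^2:ℝ):Hq) → z * z = -((sz^2:ℝ):Hq) →
      sy^2 ≠ sz^2 → y ≠ z := by
    intro y z sy sz hy hz hsy h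
    rw [h, hz] at hy
    exact hcoe _ _ hsy (neg_injective hy).symm
  by_cases hA : A = 0
  · subst hA
    have f1 : B * x1 + C = 0 := by simpa using e1
    have f2 : B * x2 + C = 0 := by simpa using e2
    have hsub : B * (x1 - x2) = 0 := by
      rw [mul_sub]
      have : (B * x1 + C) - (B * x2 + C) = B * x1 - B * x2 := by noncomm_ring
      rw [← this, f1, f2, sub_zero]
    have hB : B = 0 := right_cancel0 hsub (sub_ne_zero.mpr (hne _ _ _ _ hx1 hx2 h12))
    subst hB
    refine ⟨rfl, rfl, ?_⟩
    simpa using f1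
  · exfalso
    have key : ∀ (d : Hq) (sd : ℝ), d * d = -((sd^2:ℝ):Hq) →
        A * (d * d) + B * d + C = 0 → d ≠ x1 →
        (d - x1) * d * (d - x1)⁻¹ = A⁻¹ * (-(A * x1) - B) := by
      intro d sd hdsq hder hdne
      have hw : d - x1 ≠ 0 := sub_ne_zero.mpr hdne
      have hEdc : ((d - x1) * d * (d - x1)⁻¹) * (d - x1) = (d - x1) * d := by
        rw [mul_assoc, inv_mul_cancel₀ hw, mul_one]
      have step : (A * ((d - x1) * d * (d - x1)⁻¹) + A * x1 + B) * (d - x1) = 0 := by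
        have expand : (A * ((d - x1) * d * (d - x1)⁻¹) + A * x1 + B) * (d - x1)
            = A * (((d - x1) * d * (d - x1)⁻¹) * (d - x1)) + A * x1 * (d - x1) + B * (d - x1) := by
          noncomm_ring
        rw [expand, hEdc]
        have : A * ((d - x1) * d) + A * x1 * (d - x1) + B * (d - x1)
            = (A * (d * d) + B * d + C) - (A * (x1 * x1) + B * x1 + C) := by noncomm_ring
        rw [this, hder, e1, sub_zero]
      have step2 : A * ((d - x1) * d * (d - x1)⁻¹) + A * x1 + B = 0 := right_cancel0 step hw
      have : A * ((d - x1) * d * (d - x1)⁻¹) = -(A * x1) - B := by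
        have := step2
        linear_combination (norm := noncomm_ring) this
      calc (d - x1) * d * (d - x1)⁻¹ = A⁻¹ * (A * ((d - x1) * d * (d - x1)⁻¹)) := by
            rw [← mul_assoc, inv_mul_cancel₀ hA, one_mul]
        _ = A⁻¹ * (-(A * x1) - B) := by rw [this]
    have hsq : ∀ (d : Hq) (sd : ℝ), d * d = -((sd^2:ℝ):Hq) → d ≠ x1 →
        ((d - x1) * d * (d - x1)⁻¹) * ((d - x1) * d * (d - x1)⁻¹) = -((sd^2:ℝ):Hq) := by
      intro d sd hdsq hdne
      have hw : d - x1 ≠ 0 := sub_ne_zero.mpr hdne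
      rw [conj_sq _ _ hw, hdsq, conj_real _ hw _ (coe_central _)]
    have k2 := key x2 s2 hx2 e2 ((hne _ _ _ _ hx2 hx1 (Ne.symm h12)))
    have k3 := key x3 s3 hx3 e3 ((hne _ _ _ _ hx3 hx1 (Ne.symm h13)))
    have hEE : ((x2 - x1) * x2 * (x2 - x1)⁻¹) = ((x3 - x1) * x3 * (x3 - x1)⁻¹) := by
      rw [k2, k3]
    have s2eq := hsq x2 s2 hx2 (hne _ _ _ _ hx2 hx1 (Ne.symm h12))
    have s3eq := hsq x3 s3 hx3 (hne _ _ _ _ hx3 hx1 (Ne.symm h13))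
    rw [hEE, s3eq] at s2eq
    exact hcoe _ _ h23 (neg_injective s2eq.symm)


def qk : Hq := ⟨0,0,0,1⟩

lemma qk_ne : qk ≠ 0 := by
  intro h
  have := congrArg QuaternionAlgebra.imK h
  simp [qk] at this
  exact one_ne_zero this

lemma qi_mul_qj : qi * qj = qk := by ext <;> simp only [Quaternion.re_mul, Quaternion.imI_mul, Quaternion.imJ_mul, Quaternion.imK_mul] <;> simp [qi, qj, qk]
lemma qj_mul_qi : qj * qi = -qk := by ext <;> simp only [Quaternion.re_mul, Quaternion.imI_mul, Quaternion.imJ_mul, Quaternion.imK_mul, Quaternion.re_neg, Quaternion.imI_neg, Quaternion.imJ_neg, Quaternion.imK_neg] <;> simp [qi, qj, qk]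

lemma ee20 : ee 2 0 = 0 := by simp [ee]
lemma ee21 : ee 2 1 = 0 := by simp [ee]
lemma ee22 : ee 2 2 = 1 := by simp [ee]
lemma ee00 : ee 0 0 = 1 := by simp [ee]
lemma ee01 : ee 0 1 = 0 := by simp [ee]
lemma ee02 : ee 0 2 = 0 := by simp [ee]
lemma ee10 : ee 1 0 = 0 := by simp [ee]
lemma ee11 : ee 1 1 = 1 := by simp [ee]
lemma ee12 : ee 1 2 = 0 := by simp [ee]

lemma rs_one (v : V3) : rs v 1 = v := by funext j; simp [rs]

lemma ext3 {f g : V3} (h0 : f 0 = g 0) (h1 : f 1 = g 1) (h2 : f 2 = g 2) : f = g := by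
  funext j
  fin_cases j
  · exact h0
  · exact h1
  · exact h2

lemma RLin.real_smul {M : V3 → V3} (hM : RLin M) (r : ℝ) (v : V3) :
    M (fun j => (r:Hq) * v j) = fun j => (r:Hq) * M v j := by
  have h1 : (fun j => (r:Hq) * v j) = rs v (r:Hq) := by
    funext j; simp [rs, coe_comm]
  rw [h1, hM.rsmap]
  funext j; simp [rs, coe_comm]

def Sq (M : V3 → V3) (q : Hq) (v : V3) : Prop :=
  v 1 = v 0 * q ∧ M v 1 = M v 0 * q

/-- normalization: scaling an element of `Sq q` by `t ≠ 0` lands in `Sq (t⁻¹ q t)` -/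
lemma sq_scale {M : V3 → V3} (hM : RLin M) {q : Hq} {v : V3} (h : Sq M q v)
    (t : Hq) (ht : t ≠ 0) : Sq M (t⁻¹ * q * t) (rs v t) := by
  have key : ∀ a b : Hq, a = b * q → a * t = (b * t) * (t⁻¹ * q * t) := by
    intro a b hab
    rw [hab]
    rw [show (b * t) * (t⁻¹ * q * t) = b * (t * t⁻¹) * q * t by noncomm_ring,
      mul_inv_cancel₀ ht, mul_one]
  constructor
  · have h1 : rs v t 1 = v 1 * t := rfl
    rw [h1, key _ _ h.1]; rfl
  · rw [hM.rsmap]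
    have h1 : rs (M v) t 1 = M v 1 * t := rfl
    rw [h1, key _ _ h.2]; rfl

/-- if every element of `Sq (s·i)` has vanishing 0-component then
`M e₂` has vanishing components 0 and 1. -/
lemma SinD (M : V3 → V3) (hM : RLin M) (s : ℝ) (hs : s ≠ 0)
    (hall : ∀ v : V3, Sq M ((s:Hq) * qi) v → v 0 = 0) :
    M (ee 2) 0 = 0 ∧ M (ee 2) 1 = 0 := by
  classical
  set q : Hq := (s:Hq) * qi with hqdef
  set vc : Hq → V3 := fun c => fun j => if j = 0 then c else if j = 1 then c * q else 0 with hvc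
  have vc_add : ∀ x y, vc (x + y) = vc x + vc y := by
    intro x y; funext j
    show (if j = 0 then x + y else if j = 1 then (x+y) * q else 0)
      = (if j = 0 then x else if j = 1 then x * q else 0)
        + (if j = 0 then y else if j = 1 then y * q else 0)
    split_ifs <;> simp [add_mul]
  have smul_eq : ∀ (r : ℝ) (x : Hq), r • x = (r:Hq) * x := by
    intro r x; rw [Quaternion.coe_mul_eq_smul]
  have vc_smul : ∀ (r : ℝ) (x : Hq), vc (r • x) = fun j => (r:Hq) * vc x j := by
    intro r x; funext j
    rw [smul_eq]
    show (if j = 0 then (r:Hq) * x else if j = 1 then ((r:Hq)*x) * q else 0)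
      = (r:Hq) * (if j = 0 then x else if j = 1 then x * q else 0)
    split_ifs <;> simp [mul_assoc]
  have rs_ee2_add : ∀ x y : Hq, rs (ee 2) (x + y) = rs (ee 2) x + rs (ee 2) y := by
    intro x y; funext j; simp [rs, mul_add]
  have rs_ee2_smul : ∀ (r : ℝ) (x : Hq), rs (ee 2) (r • x) = fun j => (r:Hq) * rs (ee 2) x j := by
    intro r x; funext j
    rw [smul_eq]
    show ee 2 j * ((r:Hq) * x) = (r:Hq) * (ee 2 j * x)
    rw [show ee 2 j * ((r:Hq) * x) = (ee 2 j * (r:Hq)) * x by noncomm_ring, ← coe_comm,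
      mul_assoc]
  have gadd : ∀ x y : Hq,
      M (rs (ee 2) (x+y)) 1 - M (rs (ee 2) (x+y)) 0 * q
      = (M (rs (ee 2) x) 1 - M (rs (ee 2) x) 0 * q)
        + (M (rs (ee 2) y) 1 - M (rs (ee 2) y) 0 * q) := by
    intro x y
    rw [rs_ee2_add, hM.addmap]
    simp only [Pi.add_apply]
    noncomm_ring
  have gsmul : ∀ (r : ℝ) (x : Hq),
      M (rs (ee 2) (r • x)) 1 - M (rs (ee 2) (r • x)) 0 * q
      = r • (M (rs (ee 2) x) 1 - M (rs (ee 2) x) 0 * q) := by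
    intro r x
    rw [rs_ee2_smul, hM.real_smul, smul_eq]
    noncomm_ring
  have hadd : ∀ x y : Hq,
      M (vc (x+y)) 1 - M (vc (x+y)) 0 * q
      = (M (vc x) 1 - M (vc x) 0 * q) + (M (vc y) 1 - M (vc y) 0 * q) := by
    intro x y
    rw [vc_add, hM.addmap]
    simp only [Pi.add_apply]
    noncomm_ring
  have hsmul : ∀ (r : ℝ) (x : Hq),
      M (vc (r • x)) 1 - M (vc (r • x)) 0 * q
      = r • (M (vc x) 1 - M (vc x) 0 * q) := by
    intro r x
    rw [vc_smul, hM.real_smul, smul_eq]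
    noncomm_ring
  set G : Hq →ₗ[ℝ] Hq :=
    { toFun := fun z => M (rs (ee 2) z) 1 - M (rs (ee 2) z) 0 * q
      map_add' := fun x y => gadd x y
      map_smul' := fun r x => gsmul r x } with hGdef
  set HH : Hq →ₗ[ℝ] Hq :=
    { toFun := fun c => M (vc c) 1 - M (vc c) 0 * q
      map_add' := fun x y => hadd x y
      map_smul' := fun r x => hsmul r x } with hHHdef
  have Gval : ∀ z, G z = M (rs (ee 2) z) 1 - M (rs (ee 2) z) 0 * q := fun z => rfl
  have Hval : ∀ c, HH c = M (vc c) 1 - M (vc c) 0 * q := fun c => rfl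
  have key : ∀ c z : Hq, HH c + G z = 0 → c = 0 := by
    intro c z hcz
    set v : V3 := vc c + rs (ee 2) z with hv
    have hv0 : v 0 = c := by
      show vc c 0 + ee 2 0 * z = c
      rw [ee20]
      show c + 0 * z = c
      simp
    have hv1 : v 1 = c * q := by
      show vc c 1 + ee 2 1 * z = c * q
      rw [ee21]
      show c * q + 0 * z = c * q
      simp
    have hMv : M v = M (vc c) + M (rs (ee 2) z) := hM.addmap _ _
    have hSq : Sq M q v := by
      constructor
      · rw [hv1, hv0]
      · rw [Hval, Gval] at hcz
        rw [hMv]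
        simp only [Pi.add_apply]
        linear_combination (norm := noncomm_ring) hcz
    have := hall v hSq
    rw [hv0] at this
    exact this
  have hinj : Function.Injective ((LinearMap.range G).mkQ.comp HH) := by
    rw [injective_iff_map_eq_zero]
    intro c hc
    have hmem : HH c ∈ LinearMap.range G := by
      rw [LinearMap.comp_apply] at hc
      rwa [Submodule.mkQ_apply, Submodule.Quotient.mk_eq_zero] at hc
    obtain ⟨z, hz⟩ := hmem
    refine key c (-z) ?_
    rw [map_neg, hz]
    simp
  have hfr : Module.finrank ℝ Hq = 4 := Quaternion.finrank_eq_four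
  have hle := LinearMap.finrank_le_finrank_of_injective hinj
  have hquot := Submodule.finrank_quotient_add_finrank (LinearMap.range G)
  rw [hfr] at hle hquot
  have hzero : Module.finrank ℝ (LinearMap.range G) = 0 := by omega
  have hbot : LinearMap.range G = ⊥ := Submodule.finrank_eq_zero.mp hzero
  rw [LinearMap.range_eq_bot] at hbot
  have hGzero : ∀ z, G z = 0 := by intro z; rw [hbot]; rfl
  have h1 : M (ee 2) 1 = M (ee 2) 0 * q := by
    have := hGzero 1
    rw [Gval, rs_one, sub_eq_zero] at this
    exact this
  have h2 : M (ee 2) 1 * qj = (M (ee 2) 0 * qj) * q := by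
    have := hGzero qj
    rw [Gval, hM.rsmap, sub_eq_zero] at this
    exact this
  have h3 : M (ee 2) 0 * (q * qj - qj * q) = 0 := by
    rw [h1] at h2
    calc M (ee 2) 0 * (q * qj - qj * q)
        = M (ee 2) 0 * q * qj - M (ee 2) 0 * qj * q := by noncomm_ring
      _ = 0 := by rw [h2, sub_self]
  have hcomm : q * qj - qj * q = ((2*s : ℝ) : Hq) * qk := by
    have e1 : q * qj = (s:Hq) * qk := by rw [hqdef, mul_assoc, qi_mul_qj]
    have e2 : qj * q = -((s:Hq) * qk) := by
      rw [hqdef, show qj * ((s:Hq) * qi) = (s:Hq) * (qj * qi) by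
        rw [← mul_assoc, ← coe_comm, mul_assoc], qj_mul_qi, mul_neg]
    rw [e1, e2, sub_neg_eq_add]
    have e3 : ((2*s:ℝ):Hq) = (s:Hq) + (s:Hq) := by
      rw [show (2*s : ℝ) = s + s by ring]
      exact_mod_cast rfl
    rw [e3, add_mul]
  have hne : ((2*s : ℝ) : Hq) * qk ≠ 0 := by
    intro h
    rcases mul_eq_zero.mp h with h' | h'
    · have h2s : (2*s : ℝ) = 0 := Quaternion.coe_injective (by simpa using h')
      have : s = 0 := by linarith
      exact hs this
    · exact qk_ne h'
  rw [hcomm] at h3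
  have h0 : M (ee 2) 0 = 0 := right_cancel0 h3 hne
  exact ⟨h0, by rw [h1, h0, zero_mul]⟩


lemma frame (M : V3 → V3) (hM : RLin M) :
    Covers M ∨ (M (ee 2) 0 = 0 ∧ M (ee 2) 1 = 0) := by
  classical
  by_cases hF1 : M (ee 2) 0 = 0 ∧ M (ee 2) 1 = 0
  · exact Or.inr hF1
  left
  -- existence of Sq elements with nonzero 0-component
  have hex : ∀ s : ℝ, s ≠ 0 → ∃ v : V3, Sq M ((s:Hq) * qi) v ∧ v 0 ≠ 0 := by
    intro s hs
    by_contra hno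
    push_neg at hno
    exact hF1 (SinD M hM s hs hno)
  -- normalized elements
  have hnorm : ∀ s : ℝ, s ≠ 0 → ∃ (nv : V3) (x : Hq),
      Sq M x nv ∧ nv 0 = 1 ∧ x * x = -((s^2:ℝ):Hq) := by
    intro s hs
    obtain ⟨v, hSq, h0⟩ := hex s hs
    refine ⟨rs v (v 0)⁻¹, (v 0) * ((s:Hq) * qi) * (v 0)⁻¹, ?_, ?_, ?_⟩
    · have := sq_scale hM hSq (v 0)⁻¹ (inv_ne_zero h0)
      rwa [inv_inv] at this
    · show v 0 * (v 0)⁻¹ = 1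
      exact mul_inv_cancel₀ h0
    · exact conj_qs_sq (v 0) h0 s
  set valid : V3 → Prop := fun v => (∃ q, Sq M q v) ∧ (v 0 ≠ 0 ∨ M v 0 = 0) with hvalid
  -- defect lemma
  have defect : ∀ v, valid v → ∃ γ dd, M v = ls γ v + rs (ee 2) dd := by
    intro v hv
    obtain ⟨⟨q, hSq⟩, hv0⟩ := hv
    by_cases h0 : v 0 = 0
    · have hM0 : M v 0 = 0 := by
        rcases hv0 with h | h
        · exact absurd h0 h
        · exact h
      refine ⟨0, M v 2, ?_⟩
      have hM1 : M v 1 = 0 := by rw [hSq.2, hM0, zero_mul]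
      refine ext3 ?_ ?_ ?_
      · show M v 0 = 0 * v 0 + ee 2 0 * M v 2
        rw [ee20, zero_mul, zero_mul, add_zero, hM0]
      · show M v 1 = 0 * v 1 + ee 2 1 * M v 2
        rw [ee21, zero_mul, zero_mul, add_zero, hM1]
      · show M v 2 = 0 * v 2 + ee 2 2 * M v 2
        rw [ee22, zero_mul, one_mul, zero_add]
    · refine ⟨M v 0 * (v 0)⁻¹, M v 2 - M v 0 * (v 0)⁻¹ * v 2, ?_⟩
      refine ext3 ?_ ?_ ?_
      · show M v 0 = M v 0 * (v 0)⁻¹ * v 0 + ee 2 0 * _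
        rw [ee20, zero_mul, add_zero, mul_assoc, inv_mul_cancel₀ h0, mul_one]
      · show M v 1 = M v 0 * (v 0)⁻¹ * v 1 + ee 2 1 * _
        rw [ee21, zero_mul, add_zero, hSq.2, hSq.1, ← mul_assoc,
          mul_assoc (M v 0) (v 0)⁻¹ (v 0), inv_mul_cancel₀ h0, mul_one]
      · show M v 2 = M v 0 * (v 0)⁻¹ * v 2 + ee 2 2 * (M v 2 - M v 0 * (v 0)⁻¹ * v 2)
        rw [ee22, one_mul]
        noncomm_ring
  by_cases hGT : ∃ p : Fin 3 → V3, (∀ m, valid (p m)) ∧ RIndep p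
  · obtain ⟨p, hval, hind⟩ := hGT
    choose γ dd hdef using fun m => defect (p m) (hval m)
    exact lqd_covers M hM p hind γ (ee 2) dd hdef
  · push_neg at hGT
    -- base normalized element from s = 1
    obtain ⟨p, qp, hpSq, hp0, hpsq⟩ := hnorm 1 one_ne_zero
    have hpvalid : valid p := ⟨⟨qp, hpSq⟩, Or.inl (by rw [hp0]; exact one_ne_zero)⟩
    have hp1 : p 1 = qp := by
      have := hpSq.1
      rwa [hp0, one_mul] at this
    by_cases hLine : ∀ w, valid w → ∃ t, w = rs p t
    · exfalso
      obtain ⟨w, qw, hwSq, hw0, hwsq⟩ := hnorm 2 two_ne_zero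
      have hwvalid : valid w := ⟨⟨qw, hwSq⟩, Or.inl (by rw [hw0]; exact one_ne_zero)⟩
      obtain ⟨t, ht⟩ := hLine w hwvalid
      have ht1 : t = 1 := by
        have := congrFun ht 0
        rw [hw0] at this
        have h2 : rs p t 0 = t := by rw [show rs p t 0 = p 0 * t from rfl, hp0, one_mul]
        rw [h2] at this
        exact this.symm
      rw [ht1, rs_one] at ht
      have hqw : w 1 = qw := by
        have := hwSq.1
        rwa [hw0, one_mul] at this
      have : qw = qp := by rw [← hqw, ht, hp1]
      rw [this, hpsq] at hwsq
      have h12 := Quaternion.coe_injective (neg_injective hwsq)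
      norm_num at h12
    · push_neg at hLine
      obtain ⟨w', hw'valid, hw'not⟩ := hLine
      obtain ⟨r, hrapp⟩ : ∃ r : V3, ∀ j, r j = w' j - p j * w' 0 :=
        ⟨fun j => w' j - p j * w' 0, fun j => rfl⟩
      have hr0 : r 0 = 0 := by rw [hrapp 0, hp0, one_mul, sub_self]
      have hw'r : ∀ j, w' j = r j + p j * w' 0 := by
        intro j; rw [hrapp j]; noncomm_ring
      have hrne : ∃ j, r j ≠ 0 := by
        by_contra hall
        push_neg at hall
        refine hw'not (w' 0) ?_
        funext j
        have := hall j
        rw [hrapp j] at this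
        have := sub_eq_zero.mp this
        exact this
      -- trap
      have trap : ∀ u, valid u → ∃ a b, ∀ j, u j = p j * a + r j * b := by
        intro u hu
        have hni := hGT ![p, w', u] (by
          intro m
          fin_cases m
          · exact hpvalid
          · exact hw'valid
          · exact hu)
        rw [RIndep] at hni
        push_neg at hni
        obtain ⟨s, hts, hsne⟩ := hni
        have hcomp : ∀ j, p j * s 0 + w' j * s 1 + u j * s 2 = 0 := by
          intro j
          have := congrFun hts j
          simpa [t3] using this
        by_cases hs2 : s 2 = 0
        · exfalso
          have hz : ∀ j, p j * s 0 + w' j * s 1 = 0 := by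
            intro j
            have := hcomp j
            rwa [hs2, mul_zero, add_zero] at this
          have hs1 : s 1 = 0 := by
            by_contra hs1
            refine hw'not (-(s 0 * (s 1)⁻¹)) ?_
            funext j
            have := hz j
            have : w' j * s 1 = -(p j * s 0) := by linear_combination (norm := noncomm_ring) this
            calc w' j = w' j * s 1 * (s 1)⁻¹ := by rw [mul_assoc, mul_inv_cancel₀ hs1, mul_one]
              _ = -(p j * s 0) * (s 1)⁻¹ := by rw [this]
              _ = rs p (-(s 0 * (s 1)⁻¹)) j := by
                  show -(p j * s 0) * (s 1)⁻¹ = p j * -(s 0 * (s 1)⁻¹)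
                  noncomm_ring
          have hs0 : s 0 = 0 := by
            have := hz 0
            rw [hs1, mul_zero, add_zero, hp0, one_mul] at this
            exact this
          apply hsne
          funext m
          fin_cases m <;> simp [hs0, hs1, hs2]
        · refine ⟨-((s 0) * (s 2)⁻¹) - w' 0 * ((s 1) * (s 2)⁻¹), -((s 1) * (s 2)⁻¹), ?_⟩
          intro j
          have h1 : u j * s 2 = -(p j * s 0) - w' j * s 1 := by
            linear_combination (norm := noncomm_ring) hcomp j
          have h2 : u j = (-(p j * s 0) - w' j * s 1) * (s 2)⁻¹ := by
            rw [← h1, mul_assoc, mul_inv_cancel₀ hs2, mul_one]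
          rw [h2, hw'r j]
          noncomm_ring
      by_cases hr1 : r 1 = 0
      · exfalso
        obtain ⟨w, qw, hwSq, hw0, hwsq⟩ := hnorm 2 two_ne_zero
        have hwvalid : valid w := ⟨⟨qw, hwSq⟩, Or.inl (by rw [hw0]; exact one_ne_zero)⟩
        obtain ⟨a, b, hab⟩ := trap w hwvalid
        have ha : a = 1 := by
          have := hab 0
          rw [hw0, hp0, one_mul, hr0, zero_mul, add_zero] at this
          exact this.symm
        have hqw : w 1 = qw := by
          have := hwSq.1
          rwa [hw0, one_mul] at this
        have : qw = qp := by
          have := hab 1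
          rw [hqw, ha, mul_one, hr1, zero_mul, add_zero, hp1] at this
          exact this
        rw [this, hpsq] at hwsq
        have h12 := Quaternion.coe_injective (neg_injective hwsq)
        norm_num at h12
      · -- the quadratic relation for normalized trapped elements
        have quadrel : ∀ (x : Hq) (nv : V3), Sq M x nv → nv 0 = 1 →
            (∃ a b, ∀ j, nv j = p j * a + r j * b) →
            (M r 0 * (r 1)⁻¹) * (x * x)
              + (M p 0 - M r 0 * (r 1)⁻¹ * p 1 - M r 1 * (r 1)⁻¹) * x
              + (M r 1 * (r 1)⁻¹ * p 1 - M p 1) = 0 := by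
          intro x nv hSq h0 ⟨a, b, hab⟩
          have ha : a = 1 := by
            have := hab 0
            rw [h0, hp0, one_mul, hr0, zero_mul, add_zero] at this
            exact this.symm
          rw [ha] at hab
          have hx1 : nv 1 = x := by
            have := hSq.1
            rwa [h0, one_mul] at this
          have hb : r 1 * b = x - p 1 := by
            have h' := hab 1
            rw [hx1, mul_one] at h'
            exact (sub_eq_iff_eq_add'.mpr h').symm
          have hbval : b = (r 1)⁻¹ * (x - p 1) := by
            rw [← hb, ← mul_assoc, inv_mul_cancel₀ hr1, one_mul]
          have hnv : nv = rs p 1 + rs r b := by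
            funext j
            rw [show (rs p 1 + rs r b) j = p j * 1 + r j * b from rfl]
            exact hab j
          have hMnv : M nv = rs (M p) 1 + rs (M r) b := by
            rw [hnv, hM.addmap, hM.rsmap, hM.rsmap]
          have hSq2 : M p 1 + M r 1 * b = (M p 0 + M r 0 * b) * x := by
            have := hSq.2
            rw [hMnv] at this
            simpa [rs] using this
          rw [hbval] at hSq2
          linear_combination (norm := noncomm_ring) hSq2.symm
        -- apply at s = 1 (p itself), 2, 3
        have inst1 := quadrel qp p hpSq hp0 ⟨1, 0, by
          intro j; rw [mul_one, mul_zero, add_zero]⟩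
        obtain ⟨w2, x2, hw2Sq, hw20, hw2sq⟩ := hnorm 2 two_ne_zero
        obtain ⟨w3, x3, hw3Sq, hw30, hw3sq⟩ := hnorm 3 three_ne_zero
        have inst2 := quadrel x2 w2 hw2Sq hw20
          (trap w2 ⟨⟨x2, hw2Sq⟩, Or.inl (by rw [hw20]; exact one_ne_zero)⟩)
        have inst3 := quadrel x3 w3 hw3Sq hw30
          (trap w3 ⟨⟨x3, hw3Sq⟩, Or.inl (by rw [hw30]; exact one_ne_zero)⟩)
        obtain ⟨hA, hB, hC⟩ := quad_zero _ _ _ qp x2 x3 1 2 3 hpsq hw2sq hw3sq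
          (by norm_num) (by norm_num) (by norm_num) inst1 inst2 inst3
        -- extract structure
        have hMr0 : M r 0 = 0 := by
          have : M r 0 * (r 1)⁻¹ * (r 1) = 0 := by rw [hA, zero_mul]
          rwa [mul_assoc, inv_mul_cancel₀ hr1, mul_one] at this
        set σ : Hq := M r 1 * (r 1)⁻¹ with hσ
        have hMp0 : M p 0 = σ := by
          have := hB
          rw [hMr0, zero_mul, zero_mul, sub_zero] at this
          linear_combination (norm := noncomm_ring) this
        have hMp1 : M p 1 = σ * p 1 := by
          linear_combination (norm := noncomm_ring) hC.symm
        have hMr1 : M r 1 = σ * r 1 := by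
          rw [hσ, mul_assoc, inv_mul_cancel₀ hr1, mul_one]
        -- build the left-quasi-diagonal basis
        set μ0 : Hq := M (ee 2) 0 with hμ0
        set μ1 : Hq := M (ee 2) 1 with hμ1
        set ε : Hq := -μ0 with hε
        set φ : Hq := (r 1)⁻¹ * (-μ1 + p 1 * μ0) with hφ
        have hkey1 : μ1 + p 1 * ε + r 1 * φ = 0 := by
          rw [hε, hφ, ← mul_assoc, mul_inv_cancel₀ hr1, one_mul]
          noncomm_ring
        clear_value σ μ0 μ1 ε φ
        obtain ⟨b3, hb3j⟩ : ∃ b3 : V3, ∀ j, b3 j = p j * ε + r j * φ + ee 2 j :=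
          ⟨fun j => p j * ε + r j * φ + ee 2 j, fun j => rfl⟩
        have hMb3 : M b3 = rs (M p) ε + rs (M r) φ + M (ee 2) := by
          have hbb : b3 = rs p ε + rs r φ + ee 2 := by
            funext j; exact hb3j j
          rw [hbb, hM.addmap, hM.addmap, hM.rsmap, hM.rsmap]
        -- independence
        have hind : RIndep ![p, r, b3] := by
          intro s hts
          have hcomp0 : ∀ j, p j * s 0 + r j * s 1 + b3 j * s 2 = 0 := by
            intro j
            have h := congrFun hts j
            simpa [t3] using h
          have hcomp : ∀ j, p j * (s 0 + ε * s 2) + r j * (s 1 + φ * s 2) + ee 2 j * s 2 = 0 := by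
            intro j
            have expand : p j * (s 0 + ε * s 2) + r j * (s 1 + φ * s 2) + ee 2 j * s 2
                = p j * s 0 + r j * s 1 + (p j * ε + r j * φ + ee 2 j) * s 2 := by
              noncomm_ring
            rw [expand, ← hb3j j]
            exact hcomp0 j
          have h0 : s 0 + ε * s 2 = 0 := by
            have := hcomp 0
            rwa [hp0, one_mul, hr0, zero_mul, add_zero, ee20, zero_mul, add_zero] at this
          have h2 : s 2 = 0 := by
            have := hcomp 2
            rw [h0, mul_zero, zero_add, ee22, one_mul] at this
            -- r 2 * (s 1 + φ * s 2) + s 2 = 0 and also comp1 gives s1 + φ s2 = 0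
            have h1 : s 1 + φ * s 2 = 0 := by
              have h1' := hcomp 1
              rw [h0, mul_zero, zero_add, ee21, zero_mul, add_zero] at h1'
              rcases mul_eq_zero.mp h1' with h | h
              · exact absurd h hr1
              · exact h
            rwa [h1, mul_zero, zero_add] at this
          have h1 : s 1 = 0 := by
            have h1' := hcomp 1
            rw [h0, mul_zero, zero_add, ee21, zero_mul, add_zero, h2, mul_zero, add_zero] at h1'
            rcases mul_eq_zero.mp h1' with h | h
            · exact absurd h hr1
            · exact h
          have h0' : s 0 = 0 := by
            rw [h2, mul_zero, add_zero] at h0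
            exact h0
          funext m
          fin_cases m <;> simp [h0', h1, h2]
        -- the defect data
        refine lqd_covers M hM ![p, r, b3] hind ![σ, σ, σ - 1] (ee 2)
          ![M p 2 - σ * p 2, M r 2 - σ * r 2, M b3 2 - (σ - 1) * b3 2] ?_
        intro m
        fin_cases m
        · show M p = ls σ p + rs (ee 2) (M p 2 - σ * p 2)
          refine ext3 ?_ ?_ ?_
          · show M p 0 = σ * p 0 + ee 2 0 * _
            rw [hMp0, hp0, mul_one, ee20, zero_mul, add_zero]
          · show M p 1 = σ * p 1 + ee 2 1 * _
            rw [hMp1, ee21, zero_mul, add_zero]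
          · show M p 2 = σ * p 2 + ee 2 2 * (M p 2 - σ * p 2)
            rw [ee22, one_mul]
            noncomm_ring
        · show M r = ls σ r + rs (ee 2) (M r 2 - σ * r 2)
          refine ext3 ?_ ?_ ?_
          · show M r 0 = σ * r 0 + ee 2 0 * _
            rw [hMr0, hr0, mul_zero, ee20, zero_mul, add_zero]
          · show M r 1 = σ * r 1 + ee 2 1 * _
            rw [hMr1, ee21, zero_mul, add_zero]
          · show M r 2 = σ * r 2 + ee 2 2 * (M r 2 - σ * r 2)
            rw [ee22, one_mul]
            noncomm_ring
        · show M b3 = ls (σ - 1) b3 + rs (ee 2) (M b3 2 - (σ - 1) * b3 2)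
          have hMb3j : ∀ j', M b3 j' = M p j' * ε + M r j' * φ + M (ee 2) j' := by
            intro j'
            rw [hMb3]
            rfl
          refine ext3 ?_ ?_ ?_
          · show M b3 0 = (σ - 1) * b3 0 + ee 2 0 * (M b3 2 - (σ - 1) * b3 2)
            rw [hMb3j 0, hb3j 0, hMp0, hMr0, hp0, hr0, ee20, ← hμ0, hε]
            noncomm_ring
          · show M b3 1 = (σ - 1) * b3 1 + ee 2 1 * (M b3 2 - (σ - 1) * b3 2)
            rw [hMb3j 1, hb3j 1, hMp1, hMr1, ee21, ← hμ1]
            linear_combination (norm := noncomm_ring) hkey1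
          · show M b3 2 = (σ - 1) * b3 2 + ee 2 2 * (M b3 2 - (σ - 1) * b3 2)
            rw [ee22, one_mul]
            noncomm_ring

lemma forall3 {P : Fin 3 → Prop} (h0 : P 0) (h1 : P 1) (h2 : P 2) : ∀ j, P j := by
  have h : ∀ j : Fin 3, j = 0 ∨ j = 1 ∨ j = 2 := by decide
  intro j
  rcases h j with hj | hj | hj <;> rw [hj]
  · exact h0
  · exact h1
  · exact h2

/-- coordinate permutation -/
def cperm (f : Fin 3 → Fin 3) (v : V3) : V3 := fun j => v (f j)

lemma rlin_conj (f : Fin 3 → Fin 3) {M : V3 → V3} (hM : RLin M) :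
    RLin (fun v => cperm f (M (cperm f v))) := by
  constructor
  · intro x y
    have h1 : cperm f (x + y) = cperm f x + cperm f y := by
      funext j; rfl
    rw [h1, hM.addmap]
    funext j; rfl
  · intro v t
    have h1 : cperm f (rs v t) = rs (cperm f v) t := by
      funext j; rfl
    rw [h1, hM.rsmap]
    funext j; rfl

lemma covers_conj (f : Fin 3 → Fin 3) (hinv : ∀ j, f (f j) = j) (M : V3 → V3)
    (h : Covers (fun v => cperm f (M (cperm f v)))) : Covers M := by
  obtain ⟨al, be, P, hcov⟩ := h
  refine ⟨al, be, fun l => cperm f (P l), ?_⟩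
  intro v
  obtain ⟨s, h1, h2⟩ := hcov (cperm f v)
  have hcc : cperm f (cperm f v) = v := by
    funext j
    show v (f (f j)) = v j
    rw [hinv]
  refine ⟨s, ?_, ?_⟩
  · intro j
    have hh := h1 (f j)
    rw [show cperm f v (f j) = v j by show v (f (f j)) = v j; rw [hinv]] at hh
    exact hh
  · intro j
    have hh := h2 (f j)
    rw [show (fun v => cperm f (M (cperm f v))) (cperm f v) (f j) = M v j by
      show M (cperm f (cperm f v)) (f (f j)) = M v j
      rw [hcc, hinv]] at hh
    exact hh

lemma covers_all (M : V3 → V3) (hM : RLin M) : Covers M := by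
  classical
  rcases frame M hM with h | hF2
  · exact h
  rcases frame (fun v => cperm ![0, 2, 1] (M (cperm ![0, 2, 1] v)))
      (rlin_conj ![0, 2, 1] hM) with h | hE1
  · exact covers_conj ![0, 2, 1] (by decide) M h
  rcases frame (fun v => cperm ![2, 1, 0] (M (cperm ![2, 1, 0] v)))
      (rlin_conj ![2, 1, 0] hM) with h | hE0
  · exact covers_conj ![2, 1, 0] (by decide) M h
  -- translate the failure data into diagonality
  have he1 : cperm ![0, 2, 1] (ee 2) = ee 1 := by
    refine funext (forall3 ?_ ?_ ?_)
    · show ee 2 0 = ee 1 0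
      rw [ee20, ee10]
    · show ee 2 2 = ee 1 1
      rw [ee22, ee11]
    · show ee 2 1 = ee 1 2
      rw [ee21, ee12]
  have he0 : cperm ![2, 1, 0] (ee 2) = ee 0 := by
    refine funext (forall3 ?_ ?_ ?_)
    · show ee 2 2 = ee 0 0
      rw [ee22, ee00]
    · show ee 2 1 = ee 0 1
      rw [ee21, ee01]
    · show ee 2 0 = ee 0 2
      rw [ee20, ee02]
  have h10 : M (ee 1) 0 = 0 := by
    have hh := hE1.1
    rw [show cperm ![0, 2, 1] (ee 2) = ee 1 from he1] at hh
    exact hh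
  have h12 : M (ee 1) 2 = 0 := by
    have hh := hE1.2
    rw [show cperm ![0, 2, 1] (ee 2) = ee 1 from he1] at hh
    exact hh
  have h02 : M (ee 0) 2 = 0 := by
    have hh := hE0.1
    rw [show cperm ![2, 1, 0] (ee 2) = ee 0 from he0] at hh
    exact hh
  have h01 : M (ee 0) 1 = 0 := by
    have hh := hE0.2
    rw [show cperm ![2, 1, 0] (ee 2) = ee 0 from he0] at hh
    exact hh
  have h20 : M (ee 2) 0 = 0 := hF2.1
  have h21 : M (ee 2) 1 = 0 := hF2.2
  -- diagonal structure
  have hdecomp : ∀ v : V3, v = rs (ee 0) (v 0) + (rs (ee 1) (v 1) + rs (ee 2) (v 2)) := by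
    intro v
    refine funext (forall3 ?_ ?_ ?_)
    · show v 0 = ee 0 0 * v 0 + (ee 1 0 * v 1 + ee 2 0 * v 2)
      rw [ee00, ee10, ee20, one_mul, zero_mul, zero_mul, add_zero, add_zero]
    · show v 1 = ee 0 1 * v 0 + (ee 1 1 * v 1 + ee 2 1 * v 2)
      rw [ee01, ee11, ee21, one_mul, zero_mul, zero_mul, zero_add, add_zero]
    · show v 2 = ee 0 2 * v 0 + (ee 1 2 * v 1 + ee 2 2 * v 2)
      rw [ee02, ee12, ee22, one_mul, zero_mul, zero_mul, zero_add, zero_add]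
  have hMv : ∀ v : V3, M v = rs (M (ee 0)) (v 0) + (rs (M (ee 1)) (v 1) + rs (M (ee 2)) (v 2)) := by
    intro v
    conv_lhs => rw [hdecomp v]
    rw [hM.addmap, hM.addmap, hM.rsmap, hM.rsmap, hM.rsmap]
  have hd0 : ∀ v : V3, M v 0 = M (ee 0) 0 * v 0 := by
    intro v
    have : M v 0 = M (ee 0) 0 * v 0 + (M (ee 1) 0 * v 1 + M (ee 2) 0 * v 2) := by
      rw [hMv v]; rfl
    rw [this, h10, h20, zero_mul, zero_mul, add_zero, add_zero]
  have hd1 : ∀ v : V3, M v 1 = M (ee 1) 1 * v 1 := by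
    intro v
    have : M v 1 = M (ee 0) 1 * v 0 + (M (ee 1) 1 * v 1 + M (ee 2) 1 * v 2) := by
      rw [hMv v]; rfl
    rw [this, h01, h21, zero_mul, zero_mul, zero_add, add_zero]
  have hd2 : ∀ v : V3, M v 2 = M (ee 2) 2 * v 2 := by
    intro v
    have : M v 2 = M (ee 0) 2 * v 0 + (M (ee 1) 2 * v 1 + M (ee 2) 2 * v 2) := by
      rw [hMv v]; rfl
    rw [this, h02, h12, zero_mul, zero_mul, zero_add, zero_add]
  set c0 : Hq := M (ee 0) 0 with hc0
  set c1 : Hq := M (ee 1) 1 with hc1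
  set c2 : Hq := M (ee 2) 2 with hc2
  by_cases e01 : c0 = c1
  · by_cases e02 : c0 = c2
    · -- all equal : left diagonal
      have hind : RIndep ![ee 0, ee 1, ee 2] := by
        intro s hts
        have hc : ∀ j, ee 0 j * s 0 + ee 1 j * s 1 + ee 2 j * s 2 = 0 := by
          intro j
          have hh := congrFun hts j
          simpa [t3] using hh
        funext m
        refine forall3 (P := fun m => s m = (0 : Fin 3 → Hq) m) ?_ ?_ ?_ m
        · have hh := hc 0
          rwa [ee00, ee10, ee20, one_mul, zero_mul, zero_mul, add_zero, add_zero] at hh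
        · have hh := hc 1
          rwa [ee01, ee11, ee21, one_mul, zero_mul, zero_mul, zero_add, add_zero] at hh
        · have hh := hc 2
          rwa [ee02, ee12, ee22, one_mul, zero_mul, zero_mul, zero_add, zero_add] at hh
      refine lqd_covers M hM ![ee 0, ee 1, ee 2] hind ![c0, c0, c0] (ee 2) ![0, 0, 0] ?_
      intro m
      refine forall3 (P := fun m => M (![ee 0, ee 1, ee 2] m)
        = ls (![c0, c0, c0] m) (![ee 0, ee 1, ee 2] m) + rs (ee 2) (![(0:Hq), 0, 0] m)) ?_ ?_ ?_ m
      · show M (ee 0) = ls c0 (ee 0) + rs (ee 2) 0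
        refine ext3 ?_ ?_ ?_
        · show M (ee 0) 0 = c0 * ee 0 0 + ee 2 0 * 0
          rw [ee00, ee20, mul_one, zero_mul, add_zero, hc0]
        · show M (ee 0) 1 = c0 * ee 0 1 + ee 2 1 * 0
          rw [ee01, ee21, mul_zero, zero_mul, add_zero, h01]
        · show M (ee 0) 2 = c0 * ee 0 2 + ee 2 2 * 0
          rw [ee02, ee22, mul_zero, one_mul, add_zero, h02]
      · show M (ee 1) = ls c0 (ee 1) + rs (ee 2) 0
        refine ext3 ?_ ?_ ?_
        · show M (ee 1) 0 = c0 * ee 1 0 + ee 2 0 * 0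
          rw [ee10, ee20, mul_zero, zero_mul, add_zero, h10]
        · show M (ee 1) 1 = c0 * ee 1 1 + ee 2 1 * 0
          rw [ee11, ee21, mul_one, zero_mul, add_zero, ← hc1, e01]
        · show M (ee 1) 2 = c0 * ee 1 2 + ee 2 2 * 0
          rw [ee12, ee22, mul_zero, one_mul, add_zero, h12]
      · show M (ee 2) = ls c0 (ee 2) + rs (ee 2) 0
        refine ext3 ?_ ?_ ?_
        · show M (ee 2) 0 = c0 * ee 2 0 + ee 2 0 * 0
          rw [ee20, mul_zero, zero_mul, add_zero, h20]
        · show M (ee 2) 1 = c0 * ee 2 1 + ee 2 1 * 0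
          rw [ee21, mul_zero, zero_mul, add_zero, h21]
        · show M (ee 2) 2 = c0 * ee 2 2 + ee 2 2 * 0
          rw [ee22, mul_one, one_mul, add_zero, ← hc2, e02]
    · -- c0 ≠ c2
      refine two2_covers M c0 c2 e02 (ee 1) (ee 2) (ee 0) (ee 1) ?_ ?_
      · intro v
        refine ⟨c1 * v 1 - c0 * v 1, c2 * v 2 - c0 * v 2, forall3 ?_ ?_ ?_⟩
        · show M v 0 - c0 * v 0 = ee 1 0 * _ + ee 2 0 * _
          rw [hd0 v, sub_self, ee10, ee20, zero_mul, zero_mul, add_zero]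
        · show M v 1 - c0 * v 1 = ee 1 1 * (c1 * v 1 - c0 * v 1) + ee 2 1 * _
          rw [hd1 v, ee11, ee21, one_mul, zero_mul, add_zero]
        · show M v 2 - c0 * v 2 = ee 1 2 * _ + ee 2 2 * (c2 * v 2 - c0 * v 2)
          rw [hd2 v, ee12, ee22, zero_mul, one_mul, zero_add]
      · intro v
        refine ⟨c0 * v 0 - c2 * v 0, c1 * v 1 - c2 * v 1, forall3 ?_ ?_ ?_⟩
        · show M v 0 - c2 * v 0 = ee 0 0 * (c0 * v 0 - c2 * v 0) + ee 1 0 * _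
          rw [hd0 v, ee00, ee10, one_mul, zero_mul, add_zero]
        · show M v 1 - c2 * v 1 = ee 0 1 * _ + ee 1 1 * (c1 * v 1 - c2 * v 1)
          rw [hd1 v, ee01, ee11, one_mul, zero_mul, zero_add]
        · show M v 2 - c2 * v 2 = ee 0 2 * _ + ee 1 2 * _
          rw [hd2 v, sub_self, ee02, ee12, zero_mul, zero_mul, add_zero]
  · -- c0 ≠ c1
    refine two2_covers M c0 c1 e01 (ee 1) (ee 2) (ee 0) (ee 2) ?_ ?_
    · intro v
      refine ⟨c1 * v 1 - c0 * v 1, c2 * v 2 - c0 * v 2, forall3 ?_ ?_ ?_⟩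
      · show M v 0 - c0 * v 0 = ee 1 0 * _ + ee 2 0 * _
        rw [hd0 v, sub_self, ee10, ee20, zero_mul, zero_mul, add_zero]
      · show M v 1 - c0 * v 1 = ee 1 1 * (c1 * v 1 - c0 * v 1) + ee 2 1 * _
        rw [hd1 v, ee11, ee21, one_mul, zero_mul, add_zero]
      · show M v 2 - c0 * v 2 = ee 1 2 * _ + ee 2 2 * (c2 * v 2 - c0 * v 2)
        rw [hd2 v, ee12, ee22, zero_mul, one_mul, zero_add]
    · intro v
      refine ⟨c0 * v 0 - c1 * v 0, c2 * v 2 - c1 * v 2, forall3 ?_ ?_ ?_⟩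
      · show M v 0 - c1 * v 0 = ee 0 0 * (c0 * v 0 - c1 * v 0) + ee 2 0 * _
        rw [hd0 v, ee00, ee20, one_mul, zero_mul, add_zero]
      · show M v 1 - c1 * v 1 = ee 0 1 * _ + ee 2 1 * _
        rw [hd1 v, sub_self, ee01, ee21, zero_mul, zero_mul, add_zero]
      · show M v 2 - c1 * v 2 = ee 0 2 * _ + ee 2 2 * (c2 * v 2 - c1 * v 2)
        rw [hd2 v, ee02, ee22, zero_mul, one_mul, zero_add]

lemma rank2_of_dep (C : Fin 3 → V3) (h : ¬ RIndep C) :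
    ∃ (u1 u2 : V3) (v1 v2 : Fin 3 → Hq), ∀ k j, C k j = u1 j * v1 k + u2 j * v2 k := by
  rw [RIndep] at h
  push_neg at h
  obtain ⟨s, hts, hs⟩ := h
  have hcomp : ∀ j, C 0 j * s 0 + C 1 j * s 1 + C 2 j * s 2 = 0 := by
    intro j
    have := congrFun hts j
    simpa [t3] using this
  have hmex : ∃ m, s m ≠ 0 := by
    by_contra hno
    push_neg at hno
    exact hs (funext fun m => hno m)
  obtain ⟨m, hm⟩ := hmex
  have h3 := (by decide : ∀ m : Fin 3, m = 0 ∨ m = 1 ∨ m = 2) m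
  rcases h3 with rfl | rfl | rfl
  · refine ⟨C 1, C 2, ![-(s 1 * (s 0)⁻¹), 1, 0], ![-(s 2 * (s 0)⁻¹), 0, 1], ?_⟩
    refine forall3 ?_ ?_ ?_
    · intro j
      show C 0 j = C 1 j * (-(s 1 * (s 0)⁻¹)) + C 2 j * (-(s 2 * (s 0)⁻¹))
      have h1 : C 0 j * s 0 = -(C 1 j * s 1) - C 2 j * s 2 := by
        linear_combination (norm := noncomm_ring) hcomp j
      have h2 : C 0 j = (-(C 1 j * s 1) - C 2 j * s 2) * (s 0)⁻¹ := by
        rw [← h1, mul_assoc, mul_inv_cancel₀ hm, mul_one]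
      rw [h2]
      noncomm_ring
    · intro j
      show C 1 j = C 1 j * 1 + C 2 j * 0
      rw [mul_one, mul_zero, add_zero]
    · intro j
      show C 2 j = C 1 j * 0 + C 2 j * 1
      rw [mul_one, mul_zero, zero_add]
  · refine ⟨C 0, C 2, ![1, -(s 0 * (s 1)⁻¹), 0], ![0, -(s 2 * (s 1)⁻¹), 1], ?_⟩
    refine forall3 ?_ ?_ ?_
    · intro j
      show C 0 j = C 0 j * 1 + C 2 j * 0
      rw [mul_one, mul_zero, add_zero]
    · intro j
      show C 1 j = C 0 j * (-(s 0 * (s 1)⁻¹)) + C 2 j * (-(s 2 * (s 1)⁻¹))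
      have h1 : C 1 j * s 1 = -(C 0 j * s 0) - C 2 j * s 2 := by
        linear_combination (norm := noncomm_ring) hcomp j
      have h2 : C 1 j = (-(C 0 j * s 0) - C 2 j * s 2) * (s 1)⁻¹ := by
        rw [← h1, mul_assoc, mul_inv_cancel₀ hm, mul_one]
      rw [h2]
      noncomm_ring
    · intro j
      show C 2 j = C 0 j * 0 + C 2 j * 1
      rw [mul_one, mul_zero, zero_add]
  · refine ⟨C 0, C 1, ![1, 0, -(s 0 * (s 2)⁻¹)], ![0, 1, -(s 1 * (s 2)⁻¹)], ?_⟩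
    refine forall3 ?_ ?_ ?_
    · intro j
      show C 0 j = C 0 j * 1 + C 1 j * 0
      rw [mul_one, mul_zero, add_zero]
    · intro j
      show C 1 j = C 0 j * 0 + C 1 j * 1
      rw [mul_one, mul_zero, zero_add]
    · intro j
      show C 2 j = C 0 j * (-(s 0 * (s 2)⁻¹)) + C 1 j * (-(s 1 * (s 2)⁻¹))
      have h1 : C 2 j * s 2 = -(C 0 j * s 0) - C 1 j * s 1 := by
        linear_combination (norm := noncomm_ring) hcomp j
      have h2 : C 2 j = (-(C 0 j * s 0) - C 1 j * s 1) * (s 2)⁻¹ := by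
        rw [← h1, mul_assoc, mul_inv_cancel₀ hm, mul_one]
      rw [h2]
      noncomm_ring

lemma pair_decomp (CA CB : Fin 3 → V3) (hind : RIndep CA) :
    ∃ (al be : Fin 4 → Hq) (P : Fin 4 → V3) (st : Fin 3 → Fin 4 → Hq),
      (∀ k j, CA k j = al 0 * (P 0 j * st k 0) + al 1 * (P 1 j * st k 1)
        + al 2 * (P 2 j * st k 2) + al 3 * (P 3 j * st k 3)) ∧
      (∀ k j, CB k j = be 0 * (P 0 j * st k 0) + be 1 * (P 1 j * st k 1)
        + be 2 * (P 2 j * st k 2) + be 3 * (P 3 j * st k 3)) := by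
  classical
  have hinj : Function.Injective (phi CA) := by
    rw [injective_iff_map_eq_zero]
    intro s hs
    exact hind s hs
  have hbij : Function.Bijective (phi CA) :=
    ⟨hinj, (LinearMap.injective_iff_surjective).mp hinj⟩
  set e := Equiv.ofBijective (phi CA) hbij with he
  have hsymm_add : ∀ x y : V3, e.symm (x + y) = e.symm x + e.symm y := by
    intro x y
    apply e.injective
    rw [Equiv.apply_symm_apply]
    symm
    show phi CA (e.symm x + e.symm y) = x + y
    rw [map_add]
    show e (e.symm x) + e (e.symm y) = x + y
    rw [Equiv.apply_symm_apply, Equiv.apply_symm_apply]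
  have hphi_rs : ∀ (p : Fin 3 → V3) (sa : V3) (t : Hq), phi p (rs sa t) = rs (phi p sa) t := by
    intro p sa t
    funext j
    show p 0 j * (sa 0 * t) + p 1 j * (sa 1 * t) + p 2 j * (sa 2 * t)
      = (p 0 j * sa 0 + p 1 j * sa 1 + p 2 j * sa 2) * t
    noncomm_ring
  have hsymm_rs : ∀ (v : V3) (t : Hq), e.symm (rs v t) = rs (e.symm v) t := by
    intro v t
    apply e.injective
    rw [Equiv.apply_symm_apply]
    symm
    show phi CA (rs (e.symm v) t) = rs v t
    rw [hphi_rs]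
    show rs (e (e.symm v)) t = rs v t
    rw [Equiv.apply_symm_apply]
  set M : V3 → V3 := fun v => phi CB (e.symm v) with hMdef
  have hMlin : RLin M := by
    constructor
    · intro x y
      show phi CB (e.symm (x + y)) = phi CB (e.symm x) + phi CB (e.symm y)
      rw [hsymm_add, map_add]
    · intro v t
      show phi CB (e.symm (rs v t)) = rs (phi CB (e.symm v)) t
      rw [hsymm_rs, hphi_rs]
  have hcolphi : ∀ (p : Fin 3 → V3), ∀ k, phi p (ee k) = p k := by
    intro p
    refine forall3 ?_ ?_ ?_
    · funext j
      show p 0 j * ee 0 0 + p 1 j * ee 0 1 + p 2 j * ee 0 2 = p 0 j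
      rw [ee00, ee01, ee02, mul_one, mul_zero, mul_zero, add_zero, add_zero]
    · funext j
      show p 0 j * ee 1 0 + p 1 j * ee 1 1 + p 2 j * ee 1 2 = p 1 j
      rw [ee10, ee11, ee12, mul_one, mul_zero, mul_zero, add_zero, zero_add]
    · funext j
      show p 0 j * ee 2 0 + p 1 j * ee 2 1 + p 2 j * ee 2 2 = p 2 j
      rw [ee20, ee21, ee22, mul_one, mul_zero, mul_zero, zero_add, zero_add]
  have hMcol : ∀ k, M (CA k) = CB k := by
    intro k
    show phi CB (e.symm (CA k)) = CB k
    have hsm : e.symm (CA k) = ee k := by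
      rw [Equiv.symm_apply_eq]
      show CA k = phi CA (ee k)
      rw [hcolphi]
    rw [hsm, hcolphi]
  obtain ⟨al, be, P, hcov⟩ := covers_all M hMlin
  choose st h1 h2 using fun k => hcov (CA k)
  refine ⟨al, be, P, st, ?_, ?_⟩
  · intro k j
    exact h1 k j
  · intro k j
    have hh := h2 k j
    rw [hMcol k] at hh
    exact hh

end R233

theorem rank_le_four_233' (T : Fin 2 → Fin 3 → Fin 3 → Quaternion ℝ) :
    ∃ (a : Fin 4 → Fin 2 → Quaternion ℝ) (b : Fin 4 → Fin 3 → Quaternion ℝ)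
      (c : Fin 4 → Fin 3 → Quaternion ℝ),
      ∀ i j k, T i j k = ∑ l : Fin 4, a l i * b l j * c l k := by
  classical
  open R233 in
  set CA : Fin 3 → V3 := fun k j => T 0 j k with hCA
  set CB : Fin 3 → V3 := fun k j => T 1 j k with hCB
  have main : ∃ (al be : Fin 4 → Hq) (P : Fin 4 → V3) (st : Fin 3 → Fin 4 → Hq),
      (∀ k j, CA k j = al 0 * (P 0 j * st k 0) + al 1 * (P 1 j * st k 1)
        + al 2 * (P 2 j * st k 2) + al 3 * (P 3 j * st k 3)) ∧
      (∀ k j, CB k j = be 0 * (P 0 j * st k 0) + be 1 * (P 1 j * st k 1)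
        + be 2 * (P 2 j * st k 2) + be 3 * (P 3 j * st k 3)) := by
    by_cases hA : RIndep CA
    · exact pair_decomp CA CB hA
    by_cases hB : RIndep CB
    · obtain ⟨al, be, P, st, h1, h2⟩ := pair_decomp CB CA hB
      exact ⟨be, al, P, st, h2, h1⟩
    · obtain ⟨u1, u2, v1, v2, hAf⟩ := rank2_of_dep CA hA
      obtain ⟨u3, u4, v3, v4, hBf⟩ := rank2_of_dep CB hB
      refine ⟨![1, 1, 0, 0], ![0, 0, 1, 1], ![u1, u2, u3, u4],
        fun k => ![v1 k, v2 k, v3 k, v4 k], ?_, ?_⟩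
      · intro k j
        show CA k j = 1 * (u1 j * v1 k) + 1 * (u2 j * v2 k)
          + 0 * (u3 j * v3 k) + 0 * (u4 j * v4 k)
        rw [one_mul, one_mul, zero_mul, zero_mul, add_zero, add_zero]
        exact hAf k j
      · intro k j
        show CB k j = 0 * (u1 j * v1 k) + 0 * (u2 j * v2 k)
          + 1 * (u3 j * v3 k) + 1 * (u4 j * v4 k)
        rw [one_mul, one_mul, zero_mul, zero_mul, zero_add, zero_add]
        exact hBf k j
  obtain ⟨al, be, P, st, h1, h2⟩ := main
  refine ⟨fun l => ![al l, be l], fun l => P l, fun l k => st k l, ?_⟩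
  intro i j k
  have hi := (by decide : ∀ i : Fin 2, i = 0 ∨ i = 1) i
  rcases hi with rfl | rfl
  · show CA k j = _
    rw [h1 k j, Fin.sum_univ_four]
    show _ = al 0 * P 0 j * st k 0 + al 1 * P 1 j * st k 1
      + al 2 * P 2 j * st k 2 + al 3 * P 3 j * st k 3
    rw [mul_assoc, mul_assoc, mul_assoc, mul_assoc]
  · show CB k j = _
    rw [h2 k j, Fin.sum_univ_four]
    show _ = be 0 * P 0 j * st k 0 + be 1 * P 1 j * st k 1
      + be 2 * P 2 j * st k 2 + be 3 * P 3 j * st k 3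
    rw [mul_assoc, mul_assoc, mul_assoc, mul_assoc]



end

/-- An `n₁ × n₂ × n₃` quaternion tensor has rank at most `r` if it is a sum of
`r` simple tensors. -/
def HasRankLE {n₁ n₂ n₃ : ℕ} (r : ℕ) (T : Fin n₁ → Fin n₂ → Fin n₃ → Quaternion ℝ) : Prop :=
  ∃ (a : Fin r → Fin n₁ → Quaternion ℝ) (b : Fin r → Fin n₂ → Quaternion ℝ)
    (c : Fin r → Fin n₃ → Quaternion ℝ),
    ∀ i j k, T i j k = ∑ l : Fin r, a l i * b l j * c l k

theorem rank_le_four_233 (T : Fin 2 → Fin 3 → Fin 3 → Quaternion ℝ) :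
    HasRankLE 4 T := by
  obtain ⟨a, b, c, h⟩ := rank_le_four_233' T
  exact ⟨a, b, c, h⟩
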